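/- Let q ≥ 2 and let k be an integer with 0 ≤ k < q. If z ∈ ℂ is nonzero and can be written z = |z|·e^{i(2πk/q + θ)} for some real θ with −π/q < θ < π/q, then arg_q(z) ≡ k (mod q). In particular, arg_q(ω^a) = a for every a ∈ ZMod q, so the quantizer exactly recovers the exponent of a q-th root of unity and is robust to angular perturbations smaller than π/q. -/

import Mathlib

/-- The `q`-quantized argument `arg_q(z) = ⌊(q/(2π))·arg(z·e^{iπ/q})⌋`,
where `arg` is the principal argument taking values in `(−π, π]`. -/
noncomputable def argq (q : ℕ) (z : ℂ) : ℤ :=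
  ⌊((q : ℝ) / (2 * Real.pi)) * (z * Complex.exp ((Real.pi : ℂ) * Complex.I / (q : ℂ))).arg⌋

open Real in
lemma argq_key (q : ℕ) (hq : 2 ≤ q) (k : ℕ) (hk : k < q) (z : ℂ) (hz : z ≠ 0) (θ : ℝ)
    (hθ₁ : -(Real.pi / q) < θ) (hθ₂ : θ < Real.pi / q)
    (hzrep : z = ((‖z‖ : ℝ) : ℂ) *
      Complex.exp (Complex.I * ((2 * (Real.pi : ℝ) * k / q + θ : ℝ) : ℂ))) :
    ((argq q z : ℤ) : ZMod q) = (k : ZMod q) := by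
  have hq0 : (0:ℝ) < q := by positivity
  have hpi := Real.pi_pos
  set φ : ℝ := 2 * π * k / q + θ + π / q with hφ
  have hw : z * Complex.exp ((Real.pi : ℂ) * Complex.I / (q : ℂ)) =
      ((‖z‖ : ℝ) : ℂ) * Complex.exp ((φ : ℂ) * Complex.I) := by
    conv_lhs => rw [hzrep, mul_assoc, ← Complex.exp_add]
    have hqne : (q : ℂ) ≠ 0 := Nat.cast_ne_zero.2 (by omega)
    have he : Complex.I * ((2 * (Real.pi : ℝ) * k / q + θ : ℝ) : ℂ) +
        (Real.pi : ℂ) * Complex.I / (q : ℂ) = ((φ : ℝ) : ℂ) * Complex.I := by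
      rw [hφ]; push_cast; field_simp
    rw [he]
  have habs : 0 < ‖z‖ := norm_pos_iff.mpr hz
  have harg : (z * Complex.exp ((Real.pi : ℂ) * Complex.I / (q : ℂ))).arg =
      toIocMod (mul_pos two_pos Real.pi_pos) (-π) φ := by
    rw [hw, Complex.arg_real_mul _ habs, Complex.arg_exp_mul_I]
  -- bounds on φ
  have hkq : (k : ℝ) ≤ q - 1 := by
    have : (k : ℝ) + 1 ≤ q := by exact_mod_cast hk
    linarith
  have hφ0 : 0 < φ := by
    have h1 : 0 ≤ 2 * π * k / q := by positivity
    have h2 : 0 < θ + π / q := by linarith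
    rw [hφ]; linarith
  have hφ2 : φ < 2 * π := by
    have h2 : θ + π / q < 2 * π / q := by
      have e : (2:ℝ) * π / q = π / q + π / q := by ring
      linarith
    have h1 : 2 * π * k / q ≤ 2 * π * (q - 1) / q := by
      gcongr
    have h3 : 2 * π * (q - 1) / q + 2 * π / q = 2 * π := by field_simp; ring
    rw [hφ]; linarith
  -- the fractional part
  have hval : (q : ℝ) / (2 * π) * φ = k + (q / (2 * π)) * (θ + π / q) := by
    rw [hφ]; field_simp; ring
  set f : ℝ := (q / (2 * π)) * (θ + π / q) with hf
  have hf0 : 0 < f := by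
    apply mul_pos (by positivity); linarith
  have hf1 : f < 1 := by
    have h2 : θ + π / q < 2 * π / q := by
      have e : (2:ℝ) * π / q = π / q + π / q := by ring
      linarith
    have := mul_lt_mul_of_pos_left h2 (show (0:ℝ) < q / (2 * π) by positivity)
    calc f < q / (2 * π) * (2 * π / q) := this
      _ = 1 := by field_simp
  have hfl : ⌊f⌋ = 0 := Int.floor_eq_zero_iff.2 ⟨hf0.le, hf1⟩
  unfold argq
  rw [harg]
  by_cases hcase : φ ≤ π
  · have : toIocMod (mul_pos two_pos Real.pi_pos) (-π) φ = φ :=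
      (toIocMod_eq_self _).2 ⟨by linarith, by linarith⟩
    rw [this, hval]
    rw [show (k : ℝ) + f = (k : ℤ) + f by push_cast; ring, Int.floor_intCast_add, hfl]
    push_cast; ring
  · push_neg at hcase
    have : toIocMod (mul_pos two_pos Real.pi_pos) (-π) φ = φ - 2 * π := by
      have h := toIocMod_add_right (mul_pos two_pos Real.pi_pos) (-π) (φ - 2 * π)
      rw [sub_add_cancel] at h
      rw [h, (toIocMod_eq_self _).2 ⟨by linarith, by linarith⟩]
    rw [this]
    have hval2 : (q : ℝ) / (2 * π) * (φ - 2 * π) = (((k : ℤ) - (q : ℤ) : ℤ) : ℝ) + f := by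
      have e : (q : ℝ) / (2 * π) * (φ - 2 * π) = q / (2 * π) * φ - q := by
        field_simp
      rw [e, hval]; push_cast; ring
    rw [hval2, Int.floor_intCast_add, hfl]
    push_cast
    simp

open Real in
/-- If `z ≠ 0` can be written `z = |z|·e^{i(2πk/q + θ)}` with `0 ≤ k < q` and
`−π/q < θ < π/q`, then `arg_q(z) ≡ k (mod q)`. In particular `arg_q(ω^a) = a` for every
`a ∈ ZMod q`. -/
theorem argq_recovers_exponent
    (q : ℕ) [NeZero q] (hq : 2 ≤ q)
    (ω : ℂ) (hω : ω = Complex.exp (2 * (Real.pi : ℂ) * Complex.I / (q : ℂ)))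
    (k : ℕ) (hk : k < q) (z : ℂ) (hz : z ≠ 0) (θ : ℝ)
    (hθ₁ : -(Real.pi / q) < θ) (hθ₂ : θ < Real.pi / q)
    (hzrep : z = ((‖z‖ : ℝ) : ℂ) *
      Complex.exp (Complex.I * ((2 * (Real.pi : ℝ) * k / q + θ : ℝ) : ℂ))) :
    ((argq q z : ℤ) : ZMod q) = (k : ZMod q) ∧
    ∀ a : ZMod q, ((argq q (ω ^ a.val) : ℤ) : ZMod q) = a := by
  have hq0 : (0:ℝ) < q := by positivity
  have hpi := Real.pi_pos
  refine ⟨argq_key q hq k hk z hz θ hθ₁ hθ₂ hzrep, fun a => ?_⟩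
  set n := a.val with hn
  have hpow : ω ^ n = Complex.exp (((2 * π * n / q : ℝ) : ℂ) * Complex.I) := by
    rw [hω, ← Complex.exp_nat_mul]
    congr 1
    have hqne : (q : ℂ) ≠ 0 := Nat.cast_ne_zero.2 (by omega)
    push_cast
    field_simp
  have habs : ‖ω ^ n‖ = 1 := by
    rw [hpow, Complex.norm_exp_ofReal_mul_I]
  have hzrep' : ω ^ n = ((‖ω ^ n‖ : ℝ) : ℂ) *
      Complex.exp (Complex.I * ((2 * (Real.pi : ℝ) * n / q + 0 : ℝ) : ℂ)) := by
    rw [habs, Complex.ofReal_one, one_mul, hpow]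
    congr 1
    push_cast
    ring
  have hne : ω ^ n ≠ 0 := by
    rw [hpow]; exact Complex.exp_ne_zero _
  have := argq_key q hq n a.val_lt (ω ^ n) hne 0 (neg_lt_zero.2 (by positivity)) (by positivity) hzrep'
  rw [this, hn, ZMod.natCast_val, ZMod.cast_id]
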